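/- arXiv:1209.1221 — 2 statements merged into one kernel-verified Lean document; each statement's English description precedes it below -/
import Mathlib

section
/- There exists a subset of the natural numbers with positive lower density that contains no subset possessing a density (i.e., no subset whose lower and upper densities coincide and are positive). More precisely: there exists A ⊆ ℕ with positive lower density such that no subset B ⊆ A has positive natural density. -/
open Filter Topology

def NN (k : ℕ) : ℕ := 2 ^ (2 ^ (k + 1))

lemma NN_ge (k : ℕ) : 4 ≤ NN k := by
  have : 2 ^ 2 ≤ 2 ^ (2 ^ (k+1)) := Nat.pow_le_pow_right (by norm_num) (by
    calc 2 = 2^1 := rfl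
    _ ≤ 2^(k+1) := Nat.pow_le_pow_right (by norm_num) (by omega))
  simpa [NN] using this

lemma NN_succ (k : ℕ) : NN (k + 1) = NN k * NN k := by
  simp [NN, ← pow_add, pow_succ]
  ring_nf

lemma NN_gt (k : ℕ) : k + 1 ≤ NN k := by
  have h : k + 1 ≤ 2 ^ (k+1) := (Nat.lt_two_pow_self (n := k+1)).le
  have h2 : 2 ^ (k+1) ≤ 2 ^ (2 ^ (k+1)) := Nat.pow_le_pow_right (by norm_num) (Nat.lt_two_pow_self (n := k+1)).le
  exact h.trans h2

lemma sum_NN (k : ℕ) : 2 * (∑ j ∈ Finset.range k, NN j) ≤ NN k := by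
  induction k with
  | zero => simp
  | succ k ih =>
    rw [Finset.sum_range_succ, Nat.mul_add, NN_succ]
    have h4 := NN_ge k
    nlinarith

def AA : Set ℕ := {m | ∀ k, ¬ (NN k ≤ m ∧ m < 2 * NN k)}

open scoped Classical in
lemma count_AA (n : ℕ) (hn : 4 ≤ n) :
    n ≤ 4 * ((Finset.range (n+1)).filter (fun m => m ∈ AA)).card := by
  classical
  set K := Nat.findGreatest (fun k => NN k ≤ n) n with hKdef
  have hNN0 : NN 0 ≤ n := le_trans (le_of_eq (by norm_num [NN])) hn
  have hK : NN K ≤ n := Nat.findGreatest_spec (P := fun k => NN k ≤ n) (m := 0) (Nat.zero_le n) hNN0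
  set bad := (Finset.range (n+1)).filter (fun m => ¬ m ∈ AA) with hbad
  have hsub : bad ⊆ (Finset.range (K+1)).biUnion
      (fun k => Finset.Ico (NN k) (min (2 * NN k) (n+1))) := by
    intro m hm
    simp only [hbad, Finset.mem_filter, Finset.mem_range, AA, Set.mem_setOf_eq] at hm
    obtain ⟨hmn, hm2⟩ := hm
    push_neg at hm2
    obtain ⟨k, hk1, hk2⟩ := hm2
    have hkK : k ≤ K := by
      apply Nat.le_findGreatest
      · exact le_trans (by omega) (le_trans (NN_gt k) (le_trans hk1 (by omega)))
      · exact le_trans hk1 (by omega)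
    simp only [Finset.mem_biUnion, Finset.mem_range, Finset.mem_Ico]
    exact ⟨k, by omega, hk1, by omega⟩
  have hcard : bad.card ≤ ∑ k ∈ Finset.range (K+1), (min (2*NN k) (n+1) - NN k) := by
    refine le_trans (Finset.card_le_card hsub) (le_trans (Finset.card_biUnion_le) ?_)
    apply le_of_eq
    refine Finset.sum_congr rfl (fun k _ => ?_)
    exact Nat.card_Ico _ _
  rw [Finset.sum_range_succ] at hcard
  have hsum2 : 2 * (∑ k ∈ Finset.range K, (min (2*NN k) (n+1) - NN k)) ≤ NN K := by
    refine le_trans ?_ (sum_NN K)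
    refine Nat.mul_le_mul_left 2 (Finset.sum_le_sum (fun k _ => ?_))
    have := min_le_left (2*NN k) (n+1)
    omega
  have hglue : ((Finset.range (n+1)).filter (fun m => m ∈ AA)).card + bad.card = n + 1 := by
    rw [hbad]
    simpa using Finset.card_filter_add_card_filter_not
      (s := Finset.range (n+1)) (p := fun m => m ∈ AA)
  have hminK : min (2*NN K) (n+1) - NN K ≤ 2*NN K - NN K := by
    have := min_le_left (2*NN K) (n+1); omega
  have h4 := NN_ge K
  omega

open scoped Classical in
noncomputable def upperDensity (A : Set ℕ) : ℝ :=
  Filter.limsup (fun n : ℕ => (((Finset.range (n + 1)).filter (fun m => m ∈ A)).card : ℝ) / n) Filter.atTop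

open scoped Classical in
noncomputable def lowerDensity (A : Set ℕ) : ℝ :=
  Filter.liminf (fun n : ℕ => (((Finset.range (n + 1)).filter (fun m => m ∈ A)).card : ℝ) / n) Filter.atTop

open scoped Classical in
noncomputable def dseq (S : Set ℕ) : ℕ → ℝ :=
  fun n => (((Finset.range (n + 1)).filter (fun m => m ∈ S)).card : ℝ) / n

lemma lowerDensity_eq (S : Set ℕ) : lowerDensity S = Filter.liminf (dseq S) Filter.atTop := rfl
lemma upperDensity_eq (S : Set ℕ) : upperDensity S = Filter.limsup (dseq S) Filter.atTop := rfl

lemma dseq_nonneg (S : Set ℕ) (n : ℕ) : 0 ≤ dseq S n := by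
  unfold dseq; positivity

lemma dseq_le_two (S : Set ℕ) (n : ℕ) : dseq S n ≤ 2 := by
  classical
  unfold dseq
  rcases Nat.eq_zero_or_pos n with h | h
  · rw [h]; norm_num
  · rw [div_le_iff₀ (by exact_mod_cast h)]
    have hc : ((Finset.range (n+1)).filter (fun m => m ∈ S)).card ≤ n + 1 :=
      le_trans (Finset.card_filter_le _ _) (by simp)
    have : (((Finset.range (n+1)).filter (fun m => m ∈ S)).card : ℝ) ≤ (n : ℝ) + 1 := by
      exact_mod_cast hc
    have hn1 : (1:ℝ) ≤ (n:ℝ) := by exact_mod_cast h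
    linarith

lemma dseq_bddAbove (S : Set ℕ) : IsBoundedUnder (· ≤ ·) atTop (dseq S) :=
  isBoundedUnder_of ⟨2, fun n => dseq_le_two S n⟩

lemma dseq_bddBelow (S : Set ℕ) : IsBoundedUnder (· ≥ ·) atTop (dseq S) :=
  isBoundedUnder_of ⟨0, fun n => dseq_nonneg S n⟩

lemma lowerDensity_AA_pos : 0 < lowerDensity AA := by
  classical
  rw [lowerDensity_eq]
  have h14 : (1/4 : ℝ) ≤ Filter.liminf (dseq AA) Filter.atTop := by
    apply Filter.le_liminf_of_le
    · exact (dseq_bddAbove AA).isCoboundedUnder_ge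
    · filter_upwards [eventually_ge_atTop 4] with n hn
      have h := count_AA n hn
      unfold dseq
      rw [le_div_iff₀ (by exact_mod_cast Nat.lt_of_lt_of_le (by norm_num) hn)]
      have : (n:ℝ) ≤ 4 * (((Finset.range (n+1)).filter (fun m => m ∈ AA)).card : ℝ) := by
        exact_mod_cast h
      linarith
  linarith

lemma no_subset (B : Set ℕ) (hBA : B ⊆ AA) (hL : 0 < lowerDensity B)
    (heq : lowerDensity B = upperDensity B) : False := by
  classical
  set L := lowerDensity B with hLdef
  have hlim : Tendsto (dseq B) atTop (𝓝 L) := by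
    refine tendsto_of_liminf_eq_limsup ?_ ?_ (dseq_bddAbove B) (dseq_bddBelow B)
    · exact (lowerDensity_eq B).symm
    · rw [← upperDensity_eq]; exact heq.symm
  set c : ℕ → ℕ := fun k => (((Finset.range (NN k)).filter (fun m => m ∈ B)).card) with hc
  have hfilter : ∀ k, (Finset.range (2 * NN k)).filter (fun m => m ∈ B)
      = (Finset.range (NN k)).filter (fun m => m ∈ B) := by
    intro k
    apply Finset.ext; intro m
    simp only [Finset.mem_filter, Finset.mem_range]
    constructor
    · rintro ⟨h1, h2⟩
      refine ⟨?_, h2⟩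
      by_contra h
      exact (hBA h2) k ⟨by omega, h1⟩
    · rintro ⟨h1, h2⟩
      exact ⟨by have := NN_ge k; omega, h2⟩
  have hNup : Tendsto (fun k => NN k) atTop atTop :=
    tendsto_atTop_mono (fun k => show k ≤ NN k from le_trans (Nat.le_succ k) (NN_gt k)) tendsto_id
  have h1' : Tendsto (fun k => (c k : ℝ) / ((NN k : ℝ) - 1)) atTop (𝓝 L) := by
    have hcomp : Tendsto (fun k => dseq B (NN k - 1)) atTop (𝓝 L) :=
      hlim.comp (tendsto_atTop_mono (fun k => show k ≤ NN k - 1 from by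
        have := NN_gt k; omega) tendsto_id)
    refine hcomp.congr (fun k => ?_)
    have h4 := NN_ge k
    unfold dseq
    rw [Nat.sub_add_cancel (by omega), Nat.cast_sub (by omega), Nat.cast_one]
  have h2' : Tendsto (fun k => (c k : ℝ) / (2 * (NN k : ℝ) - 1)) atTop (𝓝 L) := by
    have hcomp : Tendsto (fun k => dseq B (2 * NN k - 1)) atTop (𝓝 L) :=
      hlim.comp (tendsto_atTop_mono (fun k => show k ≤ 2 * NN k - 1 from by
        have := NN_gt k; omega) tendsto_id)
    refine hcomp.congr (fun k => ?_)
    have h4 := NN_ge k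
    unfold dseq
    rw [Nat.sub_add_cancel (by omega), hfilter k]
    rw [Nat.cast_sub (by omega), Nat.cast_mul, Nat.cast_ofNat, Nat.cast_one]
  have hR : Tendsto (fun k => (NN k : ℝ)) atTop atTop :=
    tendsto_natCast_atTop_atTop.comp hNup
  have hD : Tendsto (fun k => 2 * (NN k : ℝ) - 1) atTop atTop := by
    have := tendsto_atTop_add_const_right atTop (-1 : ℝ) (hR.const_mul_atTop (by norm_num : (0:ℝ) < 2))
    simpa [sub_eq_add_neg] using this
  have hinv : Tendsto (fun k => (2 * (NN k : ℝ) - 1)⁻¹) atTop (𝓝 0) :=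
    tendsto_inv_atTop_zero.comp hD
  have h3 : Tendsto (fun k => ((NN k : ℝ) - 1) / (2 * (NN k : ℝ) - 1)) atTop (𝓝 (1/2 : ℝ)) := by
    have key : Tendsto (fun k => 1/2 - (1/2) * (2 * (NN k : ℝ) - 1)⁻¹) atTop (𝓝 (1/2 - (1/2) * 0)) :=
      tendsto_const_nhds.sub (hinv.const_mul (1/2))
    rw [mul_zero, sub_zero] at key
    refine key.congr (fun k => ?_)
    have h4 : (4:ℝ) ≤ (NN k : ℝ) := by exact_mod_cast NN_ge k
    have hne : 2 * (NN k : ℝ) - 1 ≠ 0 := by linarith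
    field_simp
    ring
  have h4' : Tendsto (fun k => (c k : ℝ) / (2 * (NN k : ℝ) - 1)) atTop (𝓝 (L * (1/2))) := by
    have := h1'.mul h3
    refine this.congr (fun k => ?_)
    have h4 : (4:ℝ) ≤ (NN k : ℝ) := by exact_mod_cast NN_ge k
    have hne1 : (NN k : ℝ) - 1 ≠ 0 := by linarith
    have hne2 : 2 * (NN k : ℝ) - 1 ≠ 0 := by linarith
    field_simp
  have : L = L * (1/2) := tendsto_nhds_unique h2' h4'
  linarith

theorem exists_pos_lowerDensity_no_subset_with_density :
    ∃ A : Set ℕ, 0 < lowerDensity A ∧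
      ∀ B ⊆ A, ¬ (0 < lowerDensity B ∧ lowerDensity B = upperDensity B) :=
  ⟨AA, lowerDensity_AA_pos, fun B hBA h => no_subset B hBA h.1 h.2⟩
end

section
/- Let X be a Banach space, T a bounded linear operator on X, and f a continuous linear functional on X such that |f((T - I)^n x)|^{1/n} → 0 as n → ∞ for every x ∈ X. Then the series F(z) = f(x) + Σ_{n≥1} f((T-I)^n x) · z(z-1)···(z-n+1)/n! converges uniformly on compact subsets of ℂ and defines an entire function of exponential type zero satisfying F(k) = f(T^k x) for every natural number k. -/
set_option maxHeartbeats 1000000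

open Filter Topology

private lemma aux_prod_nat (k n : ℕ) :
    (∏ j ∈ Finset.range n, (k + 1 + j)) = n.factorial * ((n + k).choose k) := by
  have h1 : (∏ j ∈ Finset.range n, (k + 1 + j)) = (k + 1).ascFactorial n := by
    induction n with
    | zero => simp
    | succ n ih => rw [Finset.prod_range_succ, ih, Nat.ascFactorial_succ, Nat.mul_comm]
  rw [h1, Nat.ascFactorial_eq_factorial_mul_choose]
  congr 1
  rw [Nat.add_comm k n, Nat.choose_symm_add]

private lemma aux_desc (k n : ℕ) (h : n ≤ k) :
    (∏ j ∈ Finset.range n, ((k : ℂ) - j)) = (k.descFactorial n : ℂ) := by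
  induction n with
  | zero => simp
  | succ n ih =>
      have hn : n ≤ k := Nat.le_of_succ_le h
      rw [Finset.prod_range_succ, ih hn, Nat.descFactorial_succ]
      have h2 : ((k : ℂ) - n) = ((k - n : ℕ) : ℂ) := by rw [Nat.cast_sub hn]
      rw [h2]; push_cast; ring

theorem interpolating_entire_function_of_type_zero
    {X : Type*} [NormedAddCommGroup X] [NormedSpace ℂ X] [CompleteSpace X]
    (T : X →L[ℂ] X) (f : X →L[ℂ] ℂ)
    (hf : ∀ x : X, Tendsto (fun n : ℕ => ‖f (((T - 1) ^ n) x)‖ ^ ((n : ℝ)⁻¹))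
      atTop (𝓝 0))
    (x : X) :
    ∃ F : ℂ → ℂ,
      (∀ K : Set ℂ, IsCompact K →
        TendstoUniformlyOn
          (fun N : ℕ => fun z : ℂ =>
            f x + ∑ n ∈ Finset.Icc 1 N,
              f (((T - 1) ^ n) x) * (∏ j ∈ Finset.range n, (z - (j : ℂ))) / (n.factorial : ℂ))
          F atTop K) ∧
      Differentiable ℂ F ∧
      Tendsto
        (fun R : ℝ => Real.log (sSup ((fun z => ‖F z‖) '' Metric.closedBall 0 R)) / R)
        atTop (𝓝 0) ∧
      (∀ k : ℕ, F (k : ℂ) = f ((T ^ k) x)) := by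
  classical
  have ha : True := trivial
  set a : ℕ → ℂ := fun n => f (((T - 1) ^ n) x) with ha'
  set g : ℕ → ℂ → ℂ := fun n z => a n * (∏ j ∈ Finset.range n, (z - (j : ℂ))) / (n.factorial : ℂ)
    with hg
  set F : ℂ → ℂ := fun z => ∑' n, g n z with hF
  -- decay of coefficients
  have decay : ∀ δ : ℝ, 0 < δ → ∀ᶠ n in atTop, ‖a n‖ ≤ δ ^ n := by
    intro δ hδ
    have h1 : ∀ᶠ n in atTop, ‖a n‖ ^ ((n : ℝ)⁻¹) < δ :=
      (hf x).eventually_lt_const hδ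
    filter_upwards [h1, eventually_ge_atTop 1] with n h2 h3
    have hn : n ≠ 0 := by omega
    have h4 : (‖a n‖ ^ ((n : ℝ)⁻¹)) ^ n ≤ δ ^ n :=
      pow_le_pow_left₀ (Real.rpow_nonneg (norm_nonneg _) _) h2.le n
    rwa [Real.rpow_inv_natCast_pow (norm_nonneg _) hn] at h4
  -- basic norm bound for terms
  have bound_g : ∀ (k : ℕ) (R : ℝ), 0 ≤ R → R ≤ k → ∀ z : ℂ, ‖z‖ ≤ R →
      ∀ n, ‖g n z‖ ≤ ‖a n‖ * ((n + k).choose k : ℝ) := by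
    intro k R hR hRk z hz n
    rw [hg]
    rw [norm_div, norm_mul]
    have h1 : ‖∏ j ∈ Finset.range n, (z - (j : ℂ))‖ ≤ ∏ j ∈ Finset.range n, ((k : ℝ) + 1 + j) := by
      rw [norm_prod]
      apply Finset.prod_le_prod (fun j _ => norm_nonneg _)
      intro j _
      calc ‖z - (j : ℂ)‖ ≤ ‖z‖ + ‖(j : ℂ)‖ := norm_sub_le _ _
      _ ≤ R + j := by simp; exact hz
      _ ≤ (k : ℝ) + 1 + j := by linarith
    have h2 : (∏ j ∈ Finset.range n, ((k : ℝ) + 1 + j))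
        = (n.factorial : ℝ) * ((n + k).choose k : ℝ) := by
      have h3 := aux_prod_nat k n
      calc (∏ j ∈ Finset.range n, ((k : ℝ) + 1 + j))
          = ((∏ j ∈ Finset.range n, (k + 1 + j) : ℕ) : ℝ) := by push_cast; ring_nf
      _ = _ := by rw [h3]; push_cast; ring
    have hfac : ‖(n.factorial : ℂ)‖ = (n.factorial : ℝ) := by
      simp [Complex.norm_natCast]
    rw [hfac]
    rw [div_le_iff₀ (by positivity)]
    calc ‖a n‖ * ‖∏ j ∈ Finset.range n, (z - (j : ℂ))‖
        ≤ ‖a n‖ * ((n.factorial : ℝ) * ((n + k).choose k : ℝ)) :=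
          mul_le_mul_of_nonneg_left (h1.trans_eq h2) (norm_nonneg _)
    _ = ‖a n‖ * ((n + k).choose k : ℝ) * (n.factorial : ℝ) := by
          ring
  -- summability of the majorant
  have summable_v : ∀ k : ℕ, Summable (fun n => ‖a n‖ * ((n + k).choose k : ℝ)) := by
    intro k
    obtain ⟨N, hN⟩ := eventually_atTop.mp (decay (1/2) (by norm_num))
    have hw : Summable (fun n : ℕ => (((n + k).choose k : ℝ)) * (1/2 : ℝ)^n) :=
      summable_choose_mul_geometric_of_norm_lt_one k
        (by rw [Real.norm_eq_abs, abs_of_pos (by norm_num : (0:ℝ) < 1/2)]; norm_num)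
    rw [← summable_nat_add_iff N]
    refine Summable.of_nonneg_of_le (fun n => by positivity) (fun n => ?_)
      ((summable_nat_add_iff N).mpr hw)
    have h1 := hN (n + N) (by omega)
    calc ‖a (n + N)‖ * (((n + N + k).choose k : ℝ))
        ≤ (1/2 : ℝ)^(n+N) * (((n + N + k).choose k : ℝ)) :=
          mul_le_mul_of_nonneg_right h1 (by positivity)
    _ = _ := by ring
  -- uniform convergence of range-partial sums on closed balls
  have unif : ∀ R : ℝ, 0 ≤ R →
      TendstoUniformlyOn (fun N => fun z => ∑ n ∈ Finset.range N, g n z) F atTop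
        (Metric.closedBall 0 R) := by
    intro R hR
    apply tendstoUniformlyOn_tsum_nat (summable_v ⌈R⌉₊)
    intro n z hz
    have hz' : ‖z‖ ≤ R := by
      rw [Metric.mem_closedBall, Complex.dist_eq] at hz; simpa using hz
    exact bound_g ⌈R⌉₊ R hR (Nat.le_ceil R) z hz' n
  -- partial sums agree with the statement's partial sums
  have partial_eq : (fun N : ℕ => fun z : ℂ =>
      f x + ∑ n ∈ Finset.Icc 1 N,
        f (((T - 1) ^ n) x) * (∏ j ∈ Finset.range n, (z - (j : ℂ))) / (n.factorial : ℂ)) =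
      fun N : ℕ => fun z : ℂ => ∑ n ∈ Finset.range (N + 1), g n z := by
    funext N z
    have h0 : Finset.range (N+1) = insert 0 (Finset.Icc 1 N) := by
      ext i; simp only [Finset.mem_range, Finset.mem_insert, Finset.mem_Icc]; omega
    rw [h0, Finset.sum_insert (by simp)]
    have hg0 : g 0 z = f x := by simp [hg, ha']
    rw [hg0]
  -- the first bullet
  have bullet1 : ∀ K : Set ℂ, IsCompact K →
      TendstoUniformlyOn
        (fun N : ℕ => fun z : ℂ =>
          f x + ∑ n ∈ Finset.Icc 1 N,
            f (((T - 1) ^ n) x) * (∏ j ∈ Finset.range n, (z - (j : ℂ))) / (n.factorial : ℂ))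
        F atTop K := by
    intro K hK
    obtain ⟨R, hKR⟩ := hK.isBounded.subset_closedBall 0
    have hR0 : K ⊆ Metric.closedBall 0 (max R 0) :=
      hKR.trans (Metric.closedBall_subset_closedBall (le_max_left _ _))
    have h := (unif (max R 0) (le_max_right _ _)).mono hR0
    rw [partial_eq]
    intro u hu
    exact (Filter.tendsto_add_atTop_nat 1).eventually (h u hu)
  -- differentiability
  have diff : Differentiable ℂ F := by
    intro z
    set k := ⌈‖z‖⌉₊ + 1 with hk
    have hz1 : ‖z‖ < (k : ℝ) := by
      rw [hk]
      push_cast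
      exact lt_of_le_of_lt (Nat.le_ceil _) (lt_add_one _)
    have hzU : z ∈ Metric.ball (0:ℂ) k := by
      rw [Metric.mem_ball, Complex.dist_eq]; simpa using hz1
    have hU : DifferentiableOn ℂ F (Metric.ball (0:ℂ) k) := by
      rw [hF]
      apply Complex.differentiableOn_tsum_of_summable_norm (summable_v k)
      · intro n
        apply Differentiable.differentiableOn
        apply Differentiable.div_const
        apply Differentiable.mul (differentiable_const _)
        apply Differentiable.fun_finsetProd
        intro j _
        exact differentiable_id.sub (differentiable_const _)
      · exact Metric.isOpen_ball
      · intro n w hw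
        have hw' : ‖w‖ ≤ (k:ℝ) := by
          rw [Metric.mem_ball, Complex.dist_eq] at hw; simpa using hw.le
        exact bound_g k k (by positivity) le_rfl w hw' n
    exact hU.differentiableAt (Metric.isOpen_ball.mem_nhds hzU)
  -- interpolation
  have interp : ∀ k : ℕ, F (k : ℂ) = f ((T ^ k) x) := by
    intro k
    have hzero : ∀ n ∉ Finset.range (k+1), g n (k:ℂ) = 0 := by
      intro n hn
      simp only [Finset.mem_range, not_lt] at hn
      have hk : (k:ℕ) ∈ Finset.range n := Finset.mem_range.mpr (by omega)
      have hp : (∏ j ∈ Finset.range n, ((k:ℂ) - j)) = 0 := Finset.prod_eq_zero hk (by simp)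
      simp [hg, hp]
    rw [hF]
    simp only []
    rw [tsum_eq_sum hzero]
    have h2 : ∀ n ∈ Finset.range (k+1), g n (k:ℂ) = (k.choose n : ℂ) * f (((T - 1) ^ n) x) := by
      intro n hn
      have hnk : n ≤ k := by simp only [Finset.mem_range] at hn; omega
      have hfac : (n.factorial : ℂ) ≠ 0 := by exact_mod_cast n.factorial_ne_zero
      simp only [hg, ha']
      rw [aux_desc k n hnk, Nat.descFactorial_eq_factorial_mul_choose]
      push_cast
      field_simp
    rw [Finset.sum_congr rfl h2]
    have hT : T ^ k = ∑ n ∈ Finset.range (k+1), k.choose n • (T-1)^n := by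
      have h3 : T = (T - 1) + 1 := by rw [sub_add_cancel]
      conv_lhs => rw [h3]
      rw [Commute.add_pow (Commute.one_right (T-1)) k]
      apply Finset.sum_congr rfl
      intro m _
      rw [one_pow, mul_one, nsmul_eq_mul]
      exact (Nat.cast_commute (k.choose m) ((T-1)^m)).eq.symm
    rw [hT]
    simp only [ContinuousLinearMap.sum_apply, ContinuousLinearMap.smul_apply, map_sum, map_smul]
    apply Finset.sum_congr rfl
    intro n _
    simp [smul_eq_mul]
  refine ⟨F, bullet1, diff, ?_, interp⟩
  -- exponential type zero
  -- |F z| is bounded by the full majorant sum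
  have Fle : ∀ (k : ℕ) (R : ℝ), 0 ≤ R → R ≤ k → ∀ z : ℂ, ‖z‖ ≤ R →
      ‖F z‖ ≤ ∑' n, ‖a n‖ * ((n + k).choose k : ℝ) := by
    intro k R h0 hk z hz
    have hsum : Summable (fun n => ‖g n z‖) :=
      Summable.of_nonneg_of_le (fun n => norm_nonneg _) (fun n => bound_g k R h0 hk z hz n)
        (summable_v k)
    have h1 : ‖F z‖ ≤ ∑' n, ‖g n z‖ := by
      rw [hF]
      exact norm_tsum_le_tsum_norm hsum
    exact h1.trans (Summable.tsum_le_tsum (fun n => bound_g k R h0 hk z hz n) hsum (summable_v k))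
  -- boundedness of the image sets
  have bdd : ∀ R : ℝ, 0 ≤ R → BddAbove ((fun z => ‖F z‖) '' Metric.closedBall 0 R) := by
    intro R hR
    refine ⟨∑' n, ‖a n‖ * ((n + ⌈R⌉₊).choose ⌈R⌉₊ : ℝ), ?_⟩
    rintro y ⟨z, hz, rfl⟩
    have hz' : ‖z‖ ≤ R := by
      rw [Metric.mem_closedBall, Complex.dist_eq] at hz; simpa using hz
    exact Fle ⌈R⌉₊ R hR (Nat.le_ceil R) z hz'
  have hsup0 : ∀ R : ℝ, 0 ≤ R →
      0 ≤ sSup ((fun z => ‖F z‖) '' Metric.closedBall 0 R) := by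
    intro R hR
    have hmem : ‖F 0‖ ∈ (fun z => ‖F z‖) '' Metric.closedBall 0 R :=
      ⟨0, Metric.mem_closedBall_self hR, rfl⟩
    exact (norm_nonneg _).trans (le_csSup (bdd R hR) hmem)
  -- the key quantitative bound
  have key : ∀ δ : ℝ, 0 < δ → δ < 1 → ∃ (C : ℝ) (N : ℕ), 1 ≤ C ∧
      ∀ R : ℝ, 0 ≤ R →
        sSup ((fun z => ‖F z‖) '' Metric.closedBall 0 R)
          ≤ C * (R + 1) ^ N + (1 / (1 - δ)) ^ (⌈R⌉₊ + 1) := by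
    intro δ hδ0 hδ1
    obtain ⟨N, hN⟩ := eventually_atTop.mp (decay δ hδ0)
    set A := ∑ n ∈ Finset.range N, ‖a n‖ with hA
    have hA0 : 0 ≤ A := Finset.sum_nonneg fun n _ => norm_nonneg _
    have hC1 : (1:ℝ) ≤ A * ((N : ℝ) + 1) ^ N + 1 := by
      have := mul_nonneg hA0 (pow_nonneg (by positivity : (0:ℝ) ≤ (N:ℝ)+1) N)
      linarith
    refine ⟨A * ((N : ℝ) + 1) ^ N + 1, N, hC1, ?_⟩
    intro R hR
    set k := ⌈R⌉₊ with hk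
    have hRk : R ≤ (k : ℝ) := Nat.le_ceil R
    have hkR : (k : ℝ) ≤ R + 1 := (Nat.ceil_lt_add_one hR).le
    -- head estimate
    have head : (∑ n ∈ Finset.range N, ‖a n‖ * ((n + k).choose k : ℝ))
        ≤ (A * ((N : ℝ) + 1) ^ N) * (R + 1) ^ N := by
      have h1 : ∀ n ∈ Finset.range N, ‖a n‖ * ((n + k).choose k : ℝ)
          ≤ ‖a n‖ * (((N : ℝ) + k) ^ N) := by
        intro n hn
        have hnN : n ≤ N := (Finset.mem_range.mp hn).le
        have hnN' : n < N := Finset.mem_range.mp hn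
        have h2 : (n + k).choose k ≤ (N + k) ^ N := by
          calc (n + k).choose k = (n + k).choose n := by
                rw [Nat.add_comm n k, Nat.choose_symm_add]
          _ ≤ (n + k) ^ n := Nat.choose_le_pow _ _
          _ ≤ (N + k) ^ n := Nat.pow_le_pow_left (Nat.add_le_add_right hnN k) n
          _ ≤ (N + k) ^ N := Nat.pow_le_pow_right (Nat.lt_of_lt_of_le (Nat.zero_lt_of_lt hnN') (Nat.le_add_right N k)) hnN
        have h3 : ((n + k).choose k : ℝ) ≤ ((N : ℝ) + k) ^ N := by
          calc ((n + k).choose k : ℝ) ≤ (((N + k) ^ N : ℕ) : ℝ) := by exact_mod_cast h2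
          _ = ((N : ℝ) + k) ^ N := by push_cast; ring
        exact mul_le_mul_of_nonneg_left h3 (norm_nonneg _)
      calc (∑ n ∈ Finset.range N, ‖a n‖ * ((n + k).choose k : ℝ))
          ≤ ∑ n ∈ Finset.range N, ‖a n‖ * (((N : ℝ) + k) ^ N) :=
            Finset.sum_le_sum h1
      _ = A * (((N : ℝ) + k) ^ N) := by rw [← Finset.sum_mul]
      _ ≤ A * ((((N : ℝ) + 1) * (R + 1)) ^ N) := by
            apply mul_le_mul_of_nonneg_left _ hA0
            apply pow_le_pow_left₀ (by positivity)
            nlinarith [hkR, hR]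
      _ = (A * ((N : ℝ) + 1) ^ N) * (R + 1) ^ N := by rw [mul_pow]; ring
    -- tail estimate
    have hw : Summable (fun n : ℕ => (((n + k).choose k : ℝ)) * δ ^ n) :=
      summable_choose_mul_geometric_of_norm_lt_one k
        (by rw [Real.norm_eq_abs, abs_of_pos hδ0]; exact hδ1)
    have htail : (∑' n, ‖a (n + N)‖ * (((n + N + k).choose k : ℝ)))
        ≤ (1 / (1 - δ)) ^ (k + 1) := by
      have hsh : Summable (fun n : ℕ => (((n + N + k).choose k : ℝ)) * δ ^ (n + N)) :=
        (summable_nat_add_iff N).mpr hw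
      have hshv : Summable (fun n : ℕ => ‖a (n + N)‖ * (((n + N + k).choose k : ℝ))) :=
        (summable_nat_add_iff N).mpr (summable_v k)
      have h1 : (∑' n, ‖a (n + N)‖ * (((n + N + k).choose k : ℝ)))
          ≤ ∑' n, (((n + N + k).choose k : ℝ)) * δ ^ (n + N) := by
        apply Summable.tsum_le_tsum _ hshv hsh
        intro n
        calc ‖a (n + N)‖ * (((n + N + k).choose k : ℝ))
            ≤ δ ^ (n + N) * (((n + N + k).choose k : ℝ)) :=
              mul_le_mul_of_nonneg_right (hN (n + N) (by omega)) (by positivity)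
        _ = _ := by ring
      have h2 : (∑' n, (((n + N + k).choose k : ℝ)) * δ ^ (n + N))
          ≤ ∑' n, (((n + k).choose k : ℝ)) * δ ^ n := by
        have h3 := Summable.sum_add_tsum_nat_add (f := fun n : ℕ => (((n + k).choose k : ℝ)) * δ ^ n) N hw
        have h4 : 0 ≤ ∑ n ∈ Finset.range N, (((n + k).choose k : ℝ)) * δ ^ n :=
          Finset.sum_nonneg fun n _ => by positivity
        linarith
      have h5 : (∑' n : ℕ, (((n + k).choose k : ℝ)) * δ ^ n) = 1 / (1 - δ) ^ (k + 1) :=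
        tsum_choose_mul_geometric_of_norm_lt_one k
          (by rw [Real.norm_eq_abs, abs_of_pos hδ0]; exact hδ1)
      have h6 : ((1:ℝ) / (1 - δ)) ^ (k + 1) = 1 / (1 - δ) ^ (k + 1) := by
        rw [div_pow, one_pow]
      rw [h6]
      exact (h1.trans h2).trans_eq h5
    -- combine
    apply csSup_le
    · exact ⟨‖F 0‖, 0, Metric.mem_closedBall_self hR, rfl⟩
    rintro y ⟨z, hz, rfl⟩
    have hz' : ‖z‖ ≤ R := by
      rw [Metric.mem_closedBall, Complex.dist_eq] at hz; simpa using hz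
    have h6 := Fle k R hR hRk z hz'
    have h7 := (Summable.sum_add_tsum_nat_add
      (f := fun n : ℕ => ‖a n‖ * ((n + k).choose k : ℝ)) N (summable_v k)).symm
    calc ‖F z‖ ≤ ∑' n, ‖a n‖ * ((n + k).choose k : ℝ) := h6
    _ = (∑ n ∈ Finset.range N, ‖a n‖ * ((n + k).choose k : ℝ))
          + ∑' n, ‖a (n + N)‖ * (((n + N + k).choose k : ℝ)) := h7
    _ ≤ (A * ((N : ℝ) + 1) ^ N) * (R + 1) ^ N + (1 / (1 - δ)) ^ (k + 1) :=
          add_le_add head htail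
    _ ≤ (A * ((N : ℝ) + 1) ^ N + 1) * (R + 1) ^ N + (1 / (1 - δ)) ^ (k + 1) := by
          have : (0:ℝ) ≤ (R+1)^N := by positivity
          nlinarith
  -- now the limit computation
  rw [show (0:ℝ) = 0 from rfl]
  apply tendsto_order.2
  constructor
  · -- lower bounds
    intro a' ha'
    by_cases hF0 : ∀ z : ℂ, F z = 0
    · filter_upwards [eventually_ge_atTop (0:ℝ)] with R hR
      have h1 : (fun z : ℂ => ‖F z‖) = fun _ => (0:ℝ) :=
        funext fun z => by rw [hF0 z]; simp
      have himg : (fun z : ℂ => ‖F z‖) '' Metric.closedBall 0 R = {0} := by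
        rw [h1]
        exact Set.Nonempty.image_const ⟨0, Metric.mem_closedBall_self hR⟩ 0
      rw [himg, csSup_singleton, Real.log_zero, zero_div]
      exact ha'
    · push_neg at hF0
      obtain ⟨z0, hz0⟩ := hF0
      have habs0 : 0 < ‖F z0‖ := norm_pos_iff.mpr hz0
      set c := Real.log (‖F z0‖) with hc
      have hcd : Tendsto (fun R : ℝ => c / R) atTop (𝓝 0) :=
        tendsto_const_nhds.div_atTop tendsto_id
      filter_upwards [hcd.eventually_const_lt ha',
        eventually_ge_atTop (max 1 (‖z0‖))] with R h1 h2
      have hR1 : (1:ℝ) ≤ R := le_trans (le_max_left _ _) h2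
      have hR0 : (0:ℝ) ≤ R := by linarith
      have hz0R : ‖z0‖ ≤ R := le_trans (le_max_right _ _) h2
      have hmem : ‖F z0‖ ∈ (fun z => ‖F z‖) '' Metric.closedBall 0 R := by
        refine ⟨z0, ?_, rfl⟩
        rw [Metric.mem_closedBall, Complex.dist_eq]
        simpa using hz0R
      have hle := le_csSup (bdd R hR0) hmem
      have hlog : c ≤ Real.log (sSup ((fun z => ‖F z‖) '' Metric.closedBall 0 R)) :=
        Real.log_le_log habs0 hle
      exact lt_of_lt_of_le h1 ((div_le_div_iff_of_pos_right (by linarith : (0:ℝ) < R)).mpr hlog)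
  · -- upper bounds
    intro b hb
    set δ := (1 - Real.exp (-b)) / 2 with hδdef
    have he1 : Real.exp (-b) < 1 := Real.exp_lt_one_iff.mpr (by linarith)
    have he0 : 0 < Real.exp (-b) := Real.exp_pos _
    have hδ0 : 0 < δ := by rw [hδdef]; linarith
    have hδ1 : δ < 1 := by rw [hδdef]; linarith
    have h1δ : 0 < 1 - δ := by linarith
    set L := Real.log (1 / (1 - δ)) with hLdef
    have hone : (1:ℝ) ≤ 1 / (1 - δ) := by rw [le_div_iff₀ h1δ]; linarith
    have hL0 : 0 ≤ L := Real.log_nonneg hone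
    have hLb : L < b := by
      rw [hLdef, Real.log_lt_iff_lt_exp (by positivity)]
      rw [div_lt_iff₀ h1δ]
      have hexp : Real.exp b * Real.exp (-b) = 1 := by rw [← Real.exp_add]; simp
      have h2 : Real.exp (-b) < 1 - δ := by rw [hδdef]; linarith
      nlinarith [Real.exp_pos b]
    obtain ⟨C, N, hC1, hkey⟩ := key δ hδ0 hδ1
    have hC0 : (0:ℝ) < C := lt_of_lt_of_le one_pos hC1
    set num : ℝ → ℝ := fun R =>
      (Real.log 2 + Real.log C) + (N : ℝ) * Real.log (R + 1) + (R + 2) * L with hnumdef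
    have hnum : ∀ R : ℝ, 1 ≤ R →
        Real.log (sSup ((fun z => ‖F z‖) '' Metric.closedBall 0 R)) ≤ num R := by
      intro R hR1
      have hR0 : (0:ℝ) ≤ R := by linarith
      set s := sSup ((fun z => ‖F z‖) '' Metric.closedBall 0 R) with hs
      have hs0 : 0 ≤ s := hsup0 R hR0
      have hsle := hkey R hR0
      set A1 := C * (R + 1) ^ N with hA1def
      set A2 := ((1:ℝ) / (1 - δ)) ^ (⌈R⌉₊ + 1) with hA2def
      have hpow1 : (1:ℝ) ≤ (R + 1) ^ N := by
        calc (1:ℝ) = 1 ^ N := (one_pow N).symm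
        _ ≤ (R + 1) ^ N := pow_le_pow_left₀ (by norm_num) (by linarith) N
      have hA1 : 1 ≤ A1 := by rw [hA1def]; nlinarith
      have hA2 : 1 ≤ A2 := by
        rw [hA2def]
        calc (1:ℝ) = 1 ^ (⌈R⌉₊ + 1) := (one_pow _).symm
        _ ≤ _ := pow_le_pow_left₀ (by norm_num) hone _
      have hBle : A1 + A2 ≤ 2 * (A1 * A2) := by nlinarith
      have hlog1 : Real.log s ≤ Real.log (2 * (A1 * A2)) := by
        rcases eq_or_lt_of_le hs0 with h | h
        · rw [← h, Real.log_zero]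
          apply Real.log_nonneg
          nlinarith
        · exact Real.log_le_log h (le_trans hsle hBle)
      have hlog2 : Real.log (2 * (A1 * A2)) = Real.log 2 + Real.log A1 + Real.log A2 := by
        rw [Real.log_mul (by norm_num) (by positivity), Real.log_mul (by positivity) (by positivity),
          add_assoc]
      have hlogA1 : Real.log A1 = Real.log C + (N : ℝ) * Real.log (R + 1) := by
        rw [hA1def, Real.log_mul (ne_of_gt hC0) (by positivity), Real.log_pow]
      have hlogA2 : Real.log A2 ≤ (R + 2) * L := by
        rw [hA2def, Real.log_pow, ← hLdef]
        have hceil : ((⌈R⌉₊ : ℝ) + 1) ≤ R + 2 := by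
          have := (Nat.ceil_lt_add_one hR0).le
          linarith
        have : ((⌈R⌉₊ + 1 : ℕ) : ℝ) ≤ R + 2 := by push_cast; linarith
        exact mul_le_mul_of_nonneg_right this hL0
      rw [hnumdef]
      simp only []
      linarith
    have htend : Tendsto (fun R : ℝ => num R / R) atTop (𝓝 L) := by
      have e1 : Tendsto (fun R : ℝ => (Real.log 2 + Real.log C) / R) atTop (𝓝 0) :=
        tendsto_const_nhds.div_atTop tendsto_id
      have e2 : Tendsto (fun R : ℝ => Real.log (R + 1) / R) atTop (𝓝 0) := by
        have o2 := Real.isLittleO_log_id_atTop.comp_tendsto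
          (Filter.tendsto_atTop_add_const_right atTop (1:ℝ) tendsto_id)
        have ob : (fun R : ℝ => R + 1) =O[atTop] (fun R : ℝ => R) := by
          apply Asymptotics.IsBigO.of_bound 2
          filter_upwards [eventually_ge_atTop (1:ℝ)] with R hR
          rw [Real.norm_eq_abs, Real.norm_eq_abs, abs_of_pos (by linarith), abs_of_pos
            (by linarith)]
          linarith
        have o3 : (fun R : ℝ => Real.log (R + 1)) =o[atTop] (fun R : ℝ => R) := by
          have o2' : (fun R : ℝ => Real.log (R + 1)) =o[atTop] (fun R : ℝ => R + 1) := by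
            exact o2
          exact o2'.trans_isBigO ob
        exact o3.tendsto_div_nhds_zero
      have e2' : Tendsto (fun R : ℝ => ((N : ℝ) * Real.log (R + 1)) / R) atTop (𝓝 0) := by
        have := e2.const_mul (N : ℝ)
        simpa [mul_div_assoc] using this
      have e3 : Tendsto (fun R : ℝ => ((R + 2) * L) / R) atTop (𝓝 L) := by
        have h12 : Tendsto (fun R : ℝ => (1 + 2 / R) * L) atTop (𝓝 L) := by
          have : Tendsto (fun R : ℝ => 1 + 2 / R) atTop (𝓝 1) := by
            have h2R : Tendsto (fun R : ℝ => 2 / R) atTop (𝓝 0) :=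
              tendsto_const_nhds.div_atTop tendsto_id
            simpa using tendsto_const_nhds.add h2R
          simpa using this.mul_const L
        apply Tendsto.congr' _ h12
        filter_upwards [eventually_gt_atTop (0:ℝ)] with R hR
        rw [eq_div_iff (ne_of_gt hR)]
        field_simp
      have := (e1.add e2').add e3
      simp only [zero_add] at this
      apply this.congr
      intro R
      simp only [hnumdef]
      ring
    filter_upwards [htend.eventually_lt_const hLb, eventually_ge_atTop (1:ℝ)] with R h1 h2
    have hR0 : (0:ℝ) < R := lt_of_lt_of_le one_pos h2
    exact lt_of_le_of_lt ((div_le_div_iff_of_pos_right hR0).mpr (hnum R h2)) h1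
end
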